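/- A positive integer n is a quadratic residue modulo all but finitely many primes if and only if n is a perfect square. Precisely: if n is a positive integer that is not a perfect square, then there exist infinitely many primes p such that n is a quadratic non-residue of p. -/

import Mathlib

/-- If every prime exponent in the factorization of `n ≠ 0` is even, then `n` is a square. -/
private lemma aux_isSquare_of_even_factorization {n : ℕ} (hn : n ≠ 0)
    (h : ∀ p, Even (n.factorization p)) : IsSquare n := by
  obtain ⟨a, b, ha, hb, hab, hsf⟩ := Nat.sq_mul_squarefree_of_pos (Nat.pos_of_ne_zero hn)
  have ha1 : a = 1 := by
    by_contra h1
    obtain ⟨p, hp, hpa⟩ := Nat.exists_prime_and_dvd h1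
    have hfa : a.factorization p ≤ 1 :=
      (Nat.squarefree_iff_factorization_le_one ha.ne').mp hsf p
    have hfa1 : 0 < a.factorization p := hp.factorization_pos_of_dvd ha.ne' hpa
    have hne : n.factorization p = 2 * b.factorization p + a.factorization p := by
      rw [← hab, Nat.factorization_mul (pow_ne_zero 2 hb.ne') ha.ne']
      simp [Nat.factorization_pow, two_mul]
    obtain ⟨c, hc⟩ := h p
    omega
  exact ⟨b, by rw [← hab, ha1, mul_one, sq]⟩

private lemma aux_coprime_of_modeq {b c m : ℕ} (h : b ≡ c [MOD m]) (hc : Nat.Coprime c m) :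
    Nat.Coprime b m := by
  have h1 : Nat.gcd m b = Nat.gcd m c := by
    rw [Nat.gcd_rec m b, Nat.gcd_rec m c, h]
  unfold Nat.Coprime at *
  rwa [Nat.gcd_comm, h1, Nat.gcd_comm]

/-- The key arithmetic construction: a residue class forcing the Legendre symbol to be `-1`. -/
private lemma aux_key (n : ℕ) (hn : 0 < n) (hsq : ¬ IsSquare n) :
    ∃ M b : ℕ, M ≠ 0 ∧ Nat.Coprime b M ∧
      ∀ p : ℕ, p.Prime → p ≡ b [MOD M] →
        p ≠ 2 ∧ ∀ _ : Fact p.Prime, legendreSym p (n : ℤ) = -1 := by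
  set e := n.factorization 2 with he_def
  set k := ordCompl[2] n with hk_def
  have hk0 : k ≠ 0 := (Nat.ordCompl_pos 2 hn.ne').ne'
  have hk2 : ¬ 2 ∣ k := Nat.not_dvd_ordCompl Nat.prime_two hn.ne'
  have hk_odd : Odd k := Nat.odd_iff.mpr (by omega)
  have hnk : 2 ^ e * k = n := Nat.ordProj_mul_ordCompl_eq_self n 2
  by_cases hks : IsSquare k
  · -- Case 1: the odd part is a square, so e is odd; use p ≡ 5 (mod 8), p ≡ 1 (mod k).
    have he_odd : Odd e := by
      rcases Nat.even_or_odd e with he | he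
      · exfalso; apply hsq
        obtain ⟨c, hc⟩ := he
        obtain ⟨r, hr⟩ := hks
        exact ⟨2 ^ c * r, by rw [← hnk, hc, hr]; ring⟩
      · exact he
    have hcop8k : Nat.Coprime 8 k := by
      have : Nat.Coprime 2 k := (Nat.prime_two.coprime_iff_not_dvd).mpr hk2
      calc Nat.gcd 8 k = Nat.gcd (2 ^ 3) k := by norm_num
        _ = 1 := Nat.Coprime.pow_left 3 this
    obtain ⟨b, hb8, hbk⟩ := Nat.chineseRemainder hcop8k 5 1
    refine ⟨8 * k, b, by positivity, ?_, ?_⟩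
    · exact Nat.Coprime.mul_right
        (aux_coprime_of_modeq hb8 (by decide))
        (aux_coprime_of_modeq hbk (Nat.coprime_one_left k))
    · intro p hp hpb
      have hp8 : p % 8 = 5 := by
        have h8 : p ≡ 5 [MOD 8] := ((hpb.of_dvd ⟨k, rfl⟩).trans hb8)
        simpa [Nat.ModEq] using h8
      have hp2 : p ≠ 2 := by omega
      have hp_odd : Odd p := Nat.odd_iff.mpr (by omega)
      have hp4 : p % 4 = 1 := by omega
      refine ⟨hp2, fun inst => ?_⟩
      have hpk : p ≡ 1 [MOD k] := (hpb.of_dvd ⟨8, by ring⟩).trans hbk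
      have hcast : (n : ℤ) = (2 : ℤ) ^ e * (k : ℤ) := by rw [← hnk]; push_cast; ring
      rw [jacobiSym.legendreSym.to_jacobiSym, hcast, jacobiSym.mul_left, jacobiSym.pow_left,
        jacobiSym.at_two hp_odd]
      have hχ : ZMod.χ₈ (p : ZMod 8) = -1 := by
        have : (p : ZMod 8) = 5 := by
          have h := (ZMod.natCast_eq_natCast_iff p 5 8).mpr (by unfold Nat.ModEq; omega)
          simpa using h
        rw [this]; decide
      have hrec : jacobiSym (k : ℤ) p = jacobiSym (p : ℤ) k :=
        jacobiSym.quadratic_reciprocity_one_mod_four' hk_odd hp4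
      have hpk1 : jacobiSym (p : ℤ) k = 1 := by
        have hmod : (p : ℤ) % (k : ℤ) = (1 : ℤ) % (k : ℤ) := by
          have := hpk
          unfold Nat.ModEq at this
          exact_mod_cast congrArg (Nat.cast : ℕ → ℤ) this
        rw [jacobiSym.mod_left' hmod, jacobiSym.one_left]
      rw [hχ, hrec, hpk1, mul_one, he_odd.neg_one_pow]
  · -- Case 2: some odd prime q divides n to an odd power.
    have hexq : ∃ q, Odd (k.factorization q) := by
      by_contra hq; push_neg at hq
      exact hks (aux_isSquare_of_even_factorization hk0 fun p =>
        (Nat.even_or_odd _).resolve_right (hq p))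
    obtain ⟨q, hα⟩ := hexq
    have hq_prime : q.Prime := by
      by_contra h
      rw [Nat.factorization_eq_zero_of_not_prime k h] at hα
      simp at hα
    have hq2 : q ≠ 2 := by
      rintro rfl
      have h1 := Nat.odd_iff.mp hα
      exact hk2 (Nat.dvd_of_factorization_pos (by omega))
    set α := k.factorization q with hα_def
    set t := ordCompl[q] k with ht_def
    have htk : q ^ α * t = k := Nat.ordProj_mul_ordCompl_eq_self k q
    have hqt : ¬ q ∣ t := Nat.not_dvd_ordCompl hq_prime hk0
    have ht0 : t ≠ 0 := (Nat.ordCompl_pos q hk0).ne'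
    haveI : Fact q.Prime := ⟨hq_prime⟩
    obtain ⟨u, hu⟩ := FiniteField.exists_nonsquare (F := ZMod q)
      (by rw [ZMod.ringChar_zmod_n]; exact_mod_cast hq2)
    have hu0 : u ≠ 0 := fun h => hu (h ▸ ⟨0, by simp⟩)
    have huval : u.val ≠ 0 := fun h => hu0 (by rwa [← ZMod.val_eq_zero])
    have hq8t : ¬ q ∣ 8 * t := by
      rintro h
      rcases (Nat.Prime.dvd_mul hq_prime).mp h with h8 | ht
      · have h2 : q ∣ 2 := hq_prime.dvd_of_dvd_pow
          (by rwa [show (8:ℕ) = 2 ^ 3 by norm_num] at h8)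
        exact hq2 ((Nat.prime_dvd_prime_iff_eq hq_prime Nat.prime_two).mp h2)
      · exact hqt ht
    have hcop : Nat.Coprime (8 * t) q :=
      ((hq_prime.coprime_iff_not_dvd).mpr hq8t).symm
    obtain ⟨b, hb8t, hbq⟩ := Nat.chineseRemainder hcop 1 u.val
    refine ⟨8 * t * q, b, mul_ne_zero (mul_ne_zero (by norm_num) ht0) hq_prime.pos.ne', ?_, ?_⟩
    · refine Nat.Coprime.mul_right
        (aux_coprime_of_modeq hb8t (Nat.coprime_one_left _)) ?_
      refine aux_coprime_of_modeq hbq ?_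
      exact ((hq_prime.coprime_iff_not_dvd).mpr fun h =>
        huval (Nat.eq_zero_of_dvd_of_lt h (ZMod.val_lt u))).symm
    · intro p hp hpb
      have hp8 : p % 8 = 1 := by
        have h8 : p ≡ 1 [MOD 8] :=
          ((hpb.of_dvd ⟨t * q, by ring⟩).trans (hb8t.of_dvd ⟨t, rfl⟩))
        simpa [Nat.ModEq] using h8
      have hp2 : p ≠ 2 := by omega
      have hp_odd : Odd p := Nat.odd_iff.mpr (by omega)
      have hp4 : p % 4 = 1 := by omega
      refine ⟨hp2, fun inst => ?_⟩
      have hpt : p ≡ 1 [MOD t] :=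
        (hpb.of_dvd ⟨8 * q, by ring⟩).trans (hb8t.of_dvd ⟨8, by ring⟩)
      have hpq : p ≡ u.val [MOD q] := (hpb.of_dvd ⟨8 * t, by ring⟩).trans hbq
      have hcast : (n : ℤ) = (2 : ℤ) ^ e * (k : ℤ) := by rw [← hnk]; push_cast; ring
      rw [jacobiSym.legendreSym.to_jacobiSym, hcast, jacobiSym.mul_left, jacobiSym.pow_left,
        jacobiSym.at_two hp_odd]
      have hχ : ZMod.χ₈ (p : ZMod 8) = 1 := by
        have : (p : ZMod 8) = 1 := by
          have h := (ZMod.natCast_eq_natCast_iff p 1 8).mpr (by unfold Nat.ModEq; omega)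
          simpa using h
        rw [this]; decide
      have hrec : jacobiSym (k : ℤ) p = jacobiSym (p : ℤ) k :=
        jacobiSym.quadratic_reciprocity_one_mod_four' hk_odd hp4
      have hpt1 : jacobiSym (p : ℤ) t = 1 := by
        have hmod : (p : ℤ) % (t : ℤ) = (1 : ℤ) % (t : ℤ) := by
          have := hpt
          unfold Nat.ModEq at this
          exact_mod_cast congrArg (Nat.cast : ℕ → ℤ) this
        rw [jacobiSym.mod_left' hmod, jacobiSym.one_left]
      have hpq1 : jacobiSym (p : ℤ) q = -1 := by
        rw [← jacobiSym.legendreSym.to_jacobiSym]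
        refine (legendreSym.eq_neg_one_iff q).mpr ?_
        have hcast2 : (((p : ℤ) : ZMod q)) = u := by
          push_cast
          have : ((p : ℕ) : ZMod q) = ((u.val : ℕ) : ZMod q) :=
            (ZMod.natCast_eq_natCast_iff _ _ _).mpr hpq
          rw [this, ZMod.natCast_val, ZMod.cast_id]
        rwa [hcast2]
      have hsplit : jacobiSym (p : ℤ) k = -1 := by
        rw [← htk, jacobiSym.mul_right' _ (pow_ne_zero α hq_prime.pos.ne') ht0,
          jacobiSym.pow_right, hpq1, hpt1, hα.neg_one_pow, mul_one]
      rw [hχ, hrec, hsplit, one_pow, one_mul]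

theorem stmt_4 (n : ℕ) (hn : 0 < n) (hsq : ¬ IsSquare n) :
    {p : ℕ | ∃ _ : Fact (Nat.Prime p), p ≠ 2 ∧ legendreSym p (n : ℤ) = -1}.Infinite := by
  obtain ⟨M, b, hM, hcop, hkey⟩ := aux_key n hn hsq
  haveI : NeZero M := ⟨hM⟩
  have hunit : IsUnit ((b : ZMod M)) := (ZMod.isUnit_iff_coprime b M).mpr hcop
  refine (Nat.infinite_setOfPred_prime_and_eq_mod hunit).mono ?_
  rintro p ⟨hp, hpb⟩
  have hmod : p ≡ b [MOD M] := (ZMod.natCast_eq_natCast_iff _ _ _).mp hpb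
  obtain ⟨hp2, hleg⟩ := hkey p hp hmod
  exact ⟨⟨hp⟩, hp2, hleg ⟨hp⟩⟩
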